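/- Let z: ℝ → ℝ² be C², 1-periodic, injective on [0,1), with |z_s(s)| = L > 0 and z_s(s) · z_ss(s) = 0 for all s, and suppose Γ := Γ(z) ∈ L^∞(𝕋²). Then: (i) for every s and every s_* ∉ ℤ, the map s_* ↦ Γ(s,s_*) is differentiable with ∂_{s_*}Γ(s,s_*) = −Γ(s,s_*)³ · (𝒟z(s,s_*)/s̄in(s_*)) · ( (z_s(s+s_*) s̄in(s_*) − 𝒟z(s,s_*) cos(πs_*)) / s̄in(s_*)² ); (ii) ∂_{s_*}Γ(s,s_*) → 0 as s_* → 0, so setting ∂_{s_*}Γ(s,0) := 0 makes ∂_{s_*}Γ continuous; and (iii) Γ(s,s_*) = 1/L + s_* ∫₀¹ (∂_{s_*}Γ)(s,(1−τ)s_*) dτ for all (s,s_*). -/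

import Mathlib

/- STATEMENT 4: (Proposition: Expansion of Γ.) For a C², 1-periodic, simple curve z with
uniform speed |zₛ| ≡ L > 0, zₛ·zₛₛ ≡ 0, satisfying the arc-chord condition: (i) for
s_* ∉ ℤ, s_* ↦ Γ(s,s_*) is differentiable with the explicit derivative
∂Γ(s,s_*) = −Γ³ (𝒟z/s̄in)·((zₛ(s+s_*)s̄in − 𝒟z cos(πs_*))/s̄in²); (ii) ∂Γ(s,s_*) → 0 as
s_* → 0, so setting ∂Γ(s,0) := 0 makes ∂Γ continuous; (iii) Γ(s,s_*) = 1/L +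
s_* ∫₀¹ ∂Γ(s,(1−τ)s_*) dτ.  Here s̄in(s) = sin(πs)/π and 𝒟w(s,s_*) = w(s+s_*) − w(s). -/

open Real MeasureTheory intervalIntegral
open scoped RealInnerProductSpace

noncomputable section

abbrev E2 := EuclideanSpace ℝ (Fin 2)

open scoped Classical in
/-- The arc-chord function Γ(z). -/
noncomputable def arcChord (z : ℝ → E2) (s t : ℝ) : ℝ :=
  if ∃ n : ℤ, t = (n : ℝ) then ‖deriv z s‖⁻¹
  else |Real.sin (π * t)| / (π * ‖z (s + t) - z s‖)

open scoped Classical in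
/-- The partial derivative ∂_{s_*}Γ(z), given by the explicit formula off ℤ and
extended by 0 at s_* ∈ ℤ. -/
noncomputable def dArcChord (z : ℝ → E2) (s t : ℝ) : ℝ :=
  if ∃ n : ℤ, t = (n : ℝ) then 0
  else
    -(arcChord z s t) ^ 3 *
      ⟪(Real.sin (π * t) / π)⁻¹ • (z (s + t) - z s),
        ((Real.sin (π * t) / π) ^ 2)⁻¹ •
          ((Real.sin (π * t) / π) • deriv z (s + t)
            - Real.cos (π * t) • (z (s + t) - z s))⟫

open Filter in
section
namespace AC
variable {z : ℝ → E2} {s L M : ℝ}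

lemma hasDerivAt_S (t : ℝ) : HasDerivAt (fun u => Real.sin (π*u)/π) (Real.cos (π*t)) t := by
  have h1 : HasDerivAt (fun u : ℝ => π * u) π t := by
    simpa using (hasDerivAt_id t).const_mul π
  have := ((Real.hasDerivAt_sin (π*t)).comp t h1).div_const π
  have hπ : π ≠ 0 := Real.pi_ne_zero
  convert (config := {postTransparency := .all}) this using 1
  field_simp

lemma zdiff (hz : ContDiff ℝ 2 z) : Differentiable ℝ z :=
  hz.differentiable (by norm_num)

lemma deriv_contDiff (hz : ContDiff ℝ 2 z) : ContDiff ℝ 1 (deriv z) := by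
  have h2 : ContDiff ℝ ((1:ℕ∞)+1) z := by exact_mod_cast hz
  exact (contDiff_succ_iff_deriv.mp h2).2.2

lemma deriv2_continuous (hz : ContDiff ℝ 2 z) : Continuous (deriv (deriv z)) := by
  exact (deriv_contDiff hz).continuous_deriv le_rfl

lemma hasDerivAt_zshift (hz : ContDiff ℝ 2 z) (t : ℝ) :
    HasDerivAt (fun u => z (s+u)) (deriv z (s+t)) t := by
  have h1 : HasDerivAt (fun u : ℝ => s + u) 1 t := by simpa using (hasDerivAt_id t).const_add s
  convert (config := {postTransparency := .all}) ((zdiff hz (s+t)).hasDerivAt).scomp t h1 using 1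
  simp

lemma hasDerivAt_dzshift (hz : ContDiff ℝ 2 z) (t : ℝ) :
    HasDerivAt (fun u => deriv z (s+u)) (deriv (deriv z) (s+t)) t := by
  have h1 : HasDerivAt (fun u : ℝ => s + u) 1 t := by simpa using (hasDerivAt_id t).const_add s
  have h2 : DifferentiableAt ℝ (deriv z) (s+t) :=
    (deriv_contDiff hz).differentiable one_ne_zero (s+t)
  convert (config := {postTransparency := .all}) (h2.hasDerivAt).scomp t h1 using 1
  simp

lemma hasDerivAt_Zd (hz : ContDiff ℝ 2 z) (t : ℝ) :
    HasDerivAt (fun u => z (s+u) - z s) (deriv z (s+t)) t :=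
  (hasDerivAt_zshift hz t).sub_const (z s)

lemma hasDerivAt_hh (hz : ContDiff ℝ 2 z) (t : ℝ) :
    HasDerivAt (fun u => ‖z (s+u) - z s‖^2)
      (2 * ⟪z (s+t) - z s, deriv z (s+t)⟫) t := by
  have h := (hasDerivAt_Zd (s := s) hz t).inner ℝ (hasDerivAt_Zd (s := s) hz t)
  have h2 : HasDerivAt (fun u => ⟪z (s+u) - z s, z (s+u) - z s⟫)
      (2 * ⟪z (s+t) - z s, deriv z (s+t)⟫) t := by
    convert (config := {postTransparency := .all}) h using 1
    rw [real_inner_comm]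
    ring
  have : (fun u => ⟪z (s+u) - z s, z (s+u) - z s⟫) = fun u => ‖z (s+u) - z s‖^2 := by
    funext u; exact real_inner_self_eq_norm_sq _
  rwa [this] at h2

lemma hasDerivAt_P (hz : ContDiff ℝ 2 z) (t : ℝ) :
    HasDerivAt (fun u => ⟪z (s+u) - z s, deriv z (s+u)⟫)
      (‖deriv z (s+t)‖^2 + ⟪z (s+t) - z s, deriv (deriv z) (s+t)⟫) t := by
  have h := (hasDerivAt_Zd (s := s) hz t).inner ℝ (hasDerivAt_dzshift (s := s) hz t)
  convert (config := {postTransparency := .all}) h using 1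
  rw [real_inner_self_eq_norm_sq]
  ring

lemma sin_ne_of_not_int {t : ℝ} (ht : ¬ ∃ n : ℤ, t = (n:ℝ)) : Real.sin (π*t) ≠ 0 := by
  intro h
  rcases Real.sin_eq_zero_iff.mp h with ⟨n, hn⟩
  have hn' : (n:ℝ) * π = t * π := by rw [hn]; ring
  exact ht ⟨n, (mul_right_cancel₀ Real.pi_ne_zero hn').symm⟩

lemma not_int_of_sin_ne {t : ℝ} (ht : Real.sin (π*t) ≠ 0) : ¬ ∃ n : ℤ, t = (n:ℝ) := by
  rintro ⟨n, rfl⟩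
  exact ht (by simpa [mul_comm] using Real.sin_int_mul_pi n)

lemma Npos (hM : ∀ s t : ℝ, |Real.sin (π * t)| / π ≤ M * ‖z (s + t) - z s‖)
    {t : ℝ} (ht : Real.sin (π*t) ≠ 0) : 0 < ‖z (s+t) - z s‖ := by
  rcases (norm_nonneg (z (s+t) - z s)).lt_or_eq with h | h
  · exact h
  · exfalso
    have h1 := hM s t
    rw [← h, mul_zero] at h1
    have hp : 0 < |Real.sin (π*t)|/π := div_pos (abs_pos.mpr ht) Real.pi_pos
    linarith

lemma arcChord_eq_sqrt {t : ℝ} (ht : Real.sin (π*t) ≠ 0) :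
    arcChord z s t = Real.sqrt ((Real.sin (π*t)/π)^2 / ‖z (s+t) - z s‖^2) := by
  rw [arcChord, if_neg (not_int_of_sin_ne ht)]
  rw [Real.sqrt_div (sq_nonneg _), Real.sqrt_sq_eq_abs, Real.sqrt_sq (norm_nonneg _)]
  rw [abs_div, abs_of_pos Real.pi_pos, div_div]

lemma inner_simp (S c : ℝ) (X Y : E2) :
    ⟪S⁻¹ • X, (S^2)⁻¹ • (S • Y - c • X)⟫
      = S⁻¹ * ((S^2)⁻¹ * (S * ⟪X, Y⟫ - c * ⟪X, X⟫)) := by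
  rw [real_inner_smul_left, real_inner_smul_right, inner_sub_right,
    real_inner_smul_right, real_inner_smul_right]

lemma hasDerivAt_arcChord_off (hz : ContDiff ℝ 2 z)
    (hM : ∀ s t : ℝ, |Real.sin (π * t)| / π ≤ M * ‖z (s + t) - z s‖)
    {t : ℝ} (ht : ¬ ∃ n : ℤ, t = (n:ℝ)) :
    HasDerivAt (fun t' => arcChord z s t') (dArcChord z s t) t := by
  have hsin : Real.sin (π*t) ≠ 0 := sin_ne_of_not_int ht
  have hN : 0 < ‖z (s+t) - z s‖ := Npos hM hsin
  have hscont : Continuous (fun u => Real.sin (π*u)) :=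
    Real.continuous_sin.comp (continuous_const.mul continuous_id)
  have ev1 : ∀ᶠ u in nhds t, Real.sin (π*u) ≠ 0 :=
    hscont.continuousAt.eventually_ne hsin
  have hev : (fun t' => arcChord z s t') =ᶠ[nhds t]
      (fun u => Real.sqrt ((Real.sin (π*u)/π)^2 / ‖z (s+u) - z s‖^2)) := by
    filter_upwards [ev1] with u hu
    exact arcChord_eq_sqrt hu
  have hS2 : HasDerivAt (fun u => (Real.sin (π*u)/π)^2)
      (2 * (Real.sin (π*t)/π) * Real.cos (π*t)) t := by
    have h := (hasDerivAt_S t).pow 2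
    convert (config := {postTransparency := .all}) h using 1
    simp
  have hNne : ‖z (s+t) - z s‖^2 ≠ 0 := pow_ne_zero 2 (ne_of_gt hN)
  have hv : HasDerivAt (fun u => (Real.sin (π*u)/π)^2 / ‖z (s+u) - z s‖^2)
      ((2 * (Real.sin (π*t)/π) * Real.cos (π*t) * ‖z (s+t) - z s‖^2
        - (Real.sin (π*t)/π)^2 * (2 * ⟪z (s+t) - z s, deriv z (s+t)⟫))
        / (‖z (s+t) - z s‖^2)^2) t := hS2.div (hasDerivAt_hh hz t) hNne
  have hv0 : (Real.sin (π*t)/π)^2 / ‖z (s+t) - z s‖^2 ≠ 0 :=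
    div_ne_zero (pow_ne_zero 2 (div_ne_zero hsin Real.pi_ne_zero)) hNne
  have hsq := (Real.hasDerivAt_sqrt hv0).comp t hv
  have hsq' : HasDerivAt (fun u => Real.sqrt ((Real.sin (π*u)/π)^2 / ‖z (s+u) - z s‖^2))
      (1 / (2 * Real.sqrt ((Real.sin (π*t)/π)^2 / ‖z (s+t) - z s‖^2)) *
        ((2 * (Real.sin (π*t)/π) * Real.cos (π*t) * ‖z (s+t) - z s‖^2
        - (Real.sin (π*t)/π)^2 * (2 * ⟪z (s+t) - z s, deriv z (s+t)⟫))
        / (‖z (s+t) - z s‖^2)^2)) t := hsq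
  have key : dArcChord z s t
      = 1 / (2 * Real.sqrt ((Real.sin (π*t)/π)^2 / ‖z (s+t) - z s‖^2)) *
        ((2 * (Real.sin (π*t)/π) * Real.cos (π*t) * ‖z (s+t) - z s‖^2
        - (Real.sin (π*t)/π)^2 * (2 * ⟪z (s+t) - z s, deriv z (s+t)⟫))
        / (‖z (s+t) - z s‖^2)^2) := by
    rw [dArcChord, if_neg ht, arcChord, if_neg ht, inner_simp,
      Real.sqrt_div (sq_nonneg _), Real.sqrt_sq_eq_abs, Real.sqrt_sq (norm_nonneg _),
      real_inner_self_eq_norm_sq, abs_div, abs_of_pos Real.pi_pos]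
    set a := Real.sin (π*t) with ha
    set N := ‖z (s+t) - z s‖ with hNdef
    set c := Real.cos (π*t) with hc
    set P : ℝ := ⟪z (s+t) - z s, deriv z (s+t)⟫ with hP
    have hπ : (π:ℝ) ≠ 0 := Real.pi_ne_zero
    have hNne' : N ≠ 0 := ne_of_gt hN
    rcases hsin.lt_or_gt with hneg | hpos
    · rw [abs_of_neg hneg]
      field_simp
      ring
    · rw [abs_of_pos hpos]
      field_simp
      ring
  rw [key]
  exact hsq'.congr_of_eventuallyEq hev

lemma key_squeeze {f f' : ℝ → ℝ} (hf : ∀ u, HasDerivAt f (f' u) u) (h0 : f 0 = 0)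
    (h'0 : f' 0 = 0) {n : ℕ}
    (h : Tendsto (fun u => f' u / u^n) (nhdsWithin 0 {(0:ℝ)}ᶜ) (nhds 0)) :
    Tendsto (fun u => f u / u^(n+1)) (nhdsWithin 0 {(0:ℝ)}ᶜ) (nhds 0) := by
  rw [Metric.tendsto_nhdsWithin_nhds] at h ⊢
  intro ε hε
  rcases h (ε/2) (by linarith) with ⟨δ, hδ, hd⟩
  refine ⟨δ, hδ, ?_⟩
  intro u hu hud
  have hu0 : u ≠ 0 := hu
  have habs : ∀ x ∈ Set.uIcc (0:ℝ) u, |x| ≤ |u| := by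
    intro x hx
    rcases le_total (0:ℝ) u with h1 | h1
    · rw [Set.uIcc_of_le h1] at hx
      rw [abs_of_nonneg hx.1, abs_of_nonneg h1]; exact hx.2
    · rw [Set.uIcc_of_ge h1] at hx
      rw [abs_of_nonpos hx.2, abs_of_nonpos h1]; linarith [hx.1]
  have bound : ∀ x ∈ Set.uIcc (0:ℝ) u, ‖f' x‖ ≤ (ε/2) * |u|^n := by
    intro x hx
    rcases eq_or_ne x 0 with rfl | hx0
    · rw [h'0]
      simp only [norm_zero]
      positivity
    · have hxd : dist x 0 < δ := by
        rw [Real.dist_eq, sub_zero]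
        calc |x| ≤ |u| := habs x hx
        _ < δ := by rwa [Real.dist_eq, sub_zero] at hud
      have := hd hx0 hxd
      rw [Real.dist_eq, sub_zero, abs_div, abs_pow] at this
      have hb : |f' x| < (ε/2) * |x|^n := by
        rcases eq_or_lt_of_le (abs_nonneg x) with h2 | h2
        · exact absurd h2.symm (abs_ne_zero.mpr hx0)
        · rw [div_lt_iff₀ (by positivity)] at this
          linarith [this]
      have : (ε/2) * |x|^n ≤ (ε/2) * |u|^n := by
        apply mul_le_mul_of_nonneg_left _ (by linarith)
        exact pow_le_pow_left₀ (abs_nonneg x) (habs x hx) n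
      rw [Real.norm_eq_abs]; linarith
  have mvt := Convex.norm_image_sub_le_of_norm_hasDerivWithin_le
    (f := f) (f' := f') (s := Set.uIcc (0:ℝ) u)
    (fun x _ => (hf x).hasDerivWithinAt) bound (convex_uIcc 0 u)
    (Set.left_mem_uIcc) (Set.right_mem_uIcc)
  rw [h0, sub_zero, Real.norm_eq_abs, Real.norm_eq_abs, sub_zero] at mvt
  rw [Real.dist_eq, sub_zero, abs_div, abs_pow]
  have hup : 0 < |u| := abs_pos.mpr hu0
  rw [div_lt_iff₀ (by positivity)]
  calc |f u| ≤ ε/2 * |u|^n * |u| := mvt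
  _ = ε/2 * |u|^(n+1) := by ring
  _ < ε * |u|^(n+1) := by
      have : (0:ℝ) < |u|^(n+1) := by positivity
      nlinarith

lemma lim_slope (hz : ContDiff ℝ 2 z) :
    Tendsto (fun u : ℝ => u⁻¹ • (z (s+u) - z s)) (nhdsWithin 0 {(0:ℝ)}ᶜ) (nhds (deriv z s)) := by
  have h : HasDerivAt (fun u => z (s+u)) (deriv z s) 0 := by
    simpa using hasDerivAt_zshift hz (s := s) 0
  have h2 := hasDerivAt_iff_tendsto_slope.mp h
  have : slope (fun u => z (s+u)) 0 = fun u : ℝ => u⁻¹ • (z (s+u) - z s) := by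
    funext u
    rw [slope_def_module]
    simp
  rwa [this] at h2

lemma lim_N (hz : ContDiff ℝ 2 z) :
    Tendsto (fun u : ℝ => ‖z (s+u) - z s‖ / |u|) (nhdsWithin 0 {(0:ℝ)}ᶜ)
      (nhds ‖deriv z s‖) := by
  have h := (lim_slope hz (s := s)).norm
  have : (fun u : ℝ => ‖u⁻¹ • (z (s+u) - z s)‖) = fun u : ℝ => ‖z (s+u) - z s‖ / |u| := by
    funext u
    rw [norm_smul, norm_inv, Real.norm_eq_abs, div_eq_inv_mul]
  rwa [this] at h

lemma lim_A (hz : ContDiff ℝ 2 z) (ho : ∀ u, ⟪deriv z u, deriv (deriv z) u⟫ = 0) :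
    Tendsto (fun u : ℝ => ⟪z (s+u) - z s, deriv (deriv z) (s+u)⟫ / u)
      (nhdsWithin 0 {(0:ℝ)}ᶜ) (nhds 0) := by
  have hc : Tendsto (fun u : ℝ => deriv (deriv z) (s+u)) (nhdsWithin 0 {(0:ℝ)}ᶜ)
      (nhds (deriv (deriv z) s)) := by
    have : Continuous fun u : ℝ => deriv (deriv z) (s+u) :=
      (deriv2_continuous hz).comp (continuous_const.add continuous_id)
    exact (this.tendsto' 0 _ (by simp)).mono_left nhdsWithin_le_nhds
  have h := (lim_slope hz (s := s)).inner (𝕜 := ℝ) hc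
  rw [ho s] at h
  have : (fun u : ℝ => ⟪u⁻¹ • (z (s+u) - z s), deriv (deriv z) (s+u)⟫)
      = fun u : ℝ => ⟪z (s+u) - z s, deriv (deriv z) (s+u)⟫ / u := by
    funext u
    rw [real_inner_smul_left, div_eq_inv_mul]
  rwa [this] at h

lemma lim_P (hz : ContDiff ℝ 2 z) :
    Tendsto (fun u : ℝ => ⟪z (s+u) - z s, deriv z (s+u)⟫ / u)
      (nhdsWithin 0 {(0:ℝ)}ᶜ) (nhds (‖deriv z s‖^2)) := by
  have hc : Tendsto (fun u : ℝ => deriv z (s+u)) (nhdsWithin 0 {(0:ℝ)}ᶜ)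
      (nhds (deriv z s)) := by
    have : Continuous fun u : ℝ => deriv z (s+u) :=
      ((deriv_contDiff hz).continuous).comp (continuous_const.add continuous_id)
    exact (this.tendsto' 0 _ (by simp)).mono_left nhdsWithin_le_nhds
  have h := (lim_slope hz (s := s)).inner (𝕜 := ℝ) hc
  rw [real_inner_self_eq_norm_sq] at h
  have : (fun u : ℝ => ⟪u⁻¹ • (z (s+u) - z s), deriv z (s+u)⟫)
      = fun u : ℝ => ⟪z (s+u) - z s, deriv z (s+u)⟫ / u := by
    funext u
    rw [real_inner_smul_left, div_eq_inv_mul]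
  rwa [this] at h

lemma lim_h (hz : ContDiff ℝ 2 z) :
    Tendsto (fun u : ℝ => ‖z (s+u) - z s‖^2 / u^2)
      (nhdsWithin 0 {(0:ℝ)}ᶜ) (nhds (‖deriv z s‖^2)) := by
  have h := (lim_N hz (s := s)).mul (lim_N hz (s := s))
  have : (fun u : ℝ => (‖z (s+u) - z s‖/|u|) * (‖z (s+u) - z s‖/|u|))
      = fun u : ℝ => ‖z (s+u) - z s‖^2 / u^2 := by
    funext u
    rw [div_mul_div_comm, ← pow_two, ← pow_two, sq_abs]
  rw [this] at h
  simpa [pow_two] using h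

lemma lim_S : Tendsto (fun u : ℝ => (Real.sin (π*u)/π) / u)
    (nhdsWithin 0 {(0:ℝ)}ᶜ) (nhds 1) := by
  have h : HasDerivAt (fun u : ℝ => Real.sin (π*u)/π) 1 0 := by
    simpa using hasDerivAt_S 0
  have h2 := hasDerivAt_iff_tendsto_slope.mp h
  have : slope (fun u : ℝ => Real.sin (π*u)/π) 0 = fun u : ℝ => (Real.sin (π*u)/π) / u := by
    funext u
    rw [slope_def_field]
    simp [div_eq_inv_mul]
  rwa [this] at h2

lemma lim_sin2 : Tendsto (fun u : ℝ => Real.sin (π*u)^2 / u)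
    (nhdsWithin 0 {(0:ℝ)}ᶜ) (nhds 0) := by
  have hs0 : Tendsto (fun u : ℝ => Real.sin (π*u)) (nhdsWithin 0 {(0:ℝ)}ᶜ) (nhds 0) := by
    have : Continuous fun u : ℝ => Real.sin (π*u) :=
      Real.continuous_sin.comp (continuous_const.mul continuous_id)
    exact (this.tendsto' 0 _ (by simp)).mono_left nhdsWithin_le_nhds
  have h := (lim_S.mul hs0).const_mul π
  have : (fun u : ℝ => π * ((Real.sin (π*u)/π) / u * Real.sin (π*u)))
      = fun u : ℝ => Real.sin (π*u)^2 / u := by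
    funext u
    have hπ : (π:ℝ) ≠ 0 := Real.pi_ne_zero
    rcases eq_or_ne u 0 with rfl | hu
    · simp
    · field_simp
  rw [this] at h
  simpa using h

lemma hasDerivAt_cosπ (t : ℝ) :
    HasDerivAt (fun u => Real.cos (π*u)) (-π * Real.sin (π*t)) t := by
  have h1 : HasDerivAt (fun u : ℝ => π * u) π t := by
    simpa using (hasDerivAt_id t).const_mul π
  have := (Real.hasDerivAt_cos (π*t)).comp t h1
  convert (config := {postTransparency := .all}) this using 1
  ring

lemma hasDerivAt_Ssq (t : ℝ) :
    HasDerivAt (fun u => (Real.sin (π*u)/π)^2)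
      (2 * (Real.sin (π*t)/π) * Real.cos (π*t)) t := by
  have h := (hasDerivAt_S t).pow 2
  convert (config := {postTransparency := .all}) h using 1
  simp

lemma hasDerivAt_wf (hz : ContDiff ℝ 2 z) (t : ℝ) :
    HasDerivAt (fun u => ‖z (s+u) - z s‖^2 - L^2 * (Real.sin (π*u)/π)^2)
      (2 * ⟪z (s+t) - z s, deriv z (s+t)⟫
        - 2 * L^2 * (Real.sin (π*t)/π) * Real.cos (π*t)) t := by
  have h := (hasDerivAt_hh (s := s) hz t).sub ((hasDerivAt_Ssq t).const_mul (L^2))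
  convert (config := {postTransparency := .all}) h using 1
  ring

lemma hasDerivAt_wf' (hz : ContDiff ℝ 2 z) (hsp : ∀ u, ‖deriv z u‖ = L) (t : ℝ) :
    HasDerivAt (fun u => 2 * ⟪z (s+u) - z s, deriv z (s+u)⟫
        - 2 * L^2 * (Real.sin (π*u)/π) * Real.cos (π*u))
      (2 * ⟪z (s+t) - z s, deriv (deriv z) (s+t)⟫ + 4 * L^2 * Real.sin (π*t)^2) t := by
  have hP := (hasDerivAt_P (s := s) hz t).const_mul 2
  have hSc : HasDerivAt (fun u => (Real.sin (π*u)/π) * Real.cos (π*u))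
      (Real.cos (π*t)^2 - Real.sin (π*t)^2) t := by
    have := (hasDerivAt_S t).mul (hasDerivAt_cosπ t)
    convert (config := {postTransparency := .all}) this using 1
    have hπ : (π:ℝ) ≠ 0 := Real.pi_ne_zero
    field_simp
    ring
  have h := hP.sub (hSc.const_mul (2 * L^2))
  convert (config := {postTransparency := .all}) h using 1
  · funext u; simp only [Pi.sub_apply, Pi.mul_apply]; ring
  · rw [hsp (s+t)]
    linear_combination (2*L^2) * Real.sin_sq_add_cos_sq (π*t)

lemma lim_w3 (hz : ContDiff ℝ 2 z) (hsp : ∀ u, ‖deriv z u‖ = L)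
    (ho : ∀ u, ⟪deriv z u, deriv (deriv z) u⟫ = 0) :
    Tendsto (fun u : ℝ => (‖z (s+u) - z s‖^2 - L^2 * (Real.sin (π*u)/π)^2) / u^3)
      (nhdsWithin 0 {(0:ℝ)}ᶜ) (nhds 0) := by
  have l2 : Tendsto (fun u : ℝ => (2 * ⟪z (s+u) - z s, deriv (deriv z) (s+u)⟫
      + 4 * L^2 * Real.sin (π*u)^2) / u^1) (nhdsWithin 0 {(0:ℝ)}ᶜ) (nhds 0) := by
    have h := ((lim_A hz ho (s := s)).const_mul 2).add (lim_sin2.const_mul (4 * L^2))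
    simp only [mul_zero, add_zero] at h
    have : (fun u : ℝ => 2 * (⟪z (s+u) - z s, deriv (deriv z) (s+u)⟫ / u)
        + 4 * L^2 * (Real.sin (π*u)^2 / u))
        = fun u : ℝ => (2 * ⟪z (s+u) - z s, deriv (deriv z) (s+u)⟫
          + 4 * L^2 * Real.sin (π*u)^2) / u^1 := by
      funext u
      ring
    rwa [this] at h
  have l1 : Tendsto (fun u : ℝ => (2 * ⟪z (s+u) - z s, deriv z (s+u)⟫
      - 2 * L^2 * (Real.sin (π*u)/π) * Real.cos (π*u)) / u^2)
      (nhdsWithin 0 {(0:ℝ)}ᶜ) (nhds 0) := by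
    refine key_squeeze (fun u => hasDerivAt_wf' hz hsp u) ?_ ?_ l2
    · simp
    · simp
  refine key_squeeze (fun u => hasDerivAt_wf hz u) ?_ ?_ l1
  · simp
  · simp

lemma hasDerivAt_mf (hz : ContDiff ℝ 2 z) (hsp : ∀ u, ‖deriv z u‖ = L) (t : ℝ) :
    HasDerivAt (fun u => 2 * ⟪z (s+u) - z s, deriv z (s+u)⟫ * Real.cos (π*u)
        - 2 * L^2 * (Real.sin (π*u)/π))
      (2 * ⟪z (s+t) - z s, deriv (deriv z) (s+t)⟫ * Real.cos (π*t)
        - 2 * π * ⟪z (s+t) - z s, deriv z (s+t)⟫ * Real.sin (π*t)) t := by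
  have h := (((hasDerivAt_P (s := s) hz t).mul (hasDerivAt_cosπ t)).const_mul 2).sub
    ((hasDerivAt_S t).const_mul (2 * L^2))
  convert (config := {postTransparency := .all}) h using 1
  · funext u; simp only [Pi.sub_apply, Pi.mul_apply]; ring
  · rw [hsp (s+t)]
    ring

lemma lim_m2 (hz : ContDiff ℝ 2 z) (hsp : ∀ u, ‖deriv z u‖ = L)
    (ho : ∀ u, ⟪deriv z u, deriv (deriv z) u⟫ = 0) :
    Tendsto (fun u : ℝ => (2 * ⟪z (s+u) - z s, deriv z (s+u)⟫ * Real.cos (π*u)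
        - 2 * L^2 * (Real.sin (π*u)/π)) / u^2)
      (nhdsWithin 0 {(0:ℝ)}ᶜ) (nhds 0) := by
  have hcos : Tendsto (fun u : ℝ => Real.cos (π*u)) (nhdsWithin 0 {(0:ℝ)}ᶜ) (nhds 1) := by
    have : Continuous fun u : ℝ => Real.cos (π*u) :=
      Real.continuous_cos.comp (continuous_const.mul continuous_id)
    exact (this.tendsto' 0 _ (by simp)).mono_left nhdsWithin_le_nhds
  have hsin : Tendsto (fun u : ℝ => Real.sin (π*u)) (nhdsWithin 0 {(0:ℝ)}ᶜ) (nhds 0) := by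
    have : Continuous fun u : ℝ => Real.sin (π*u) :=
      Real.continuous_sin.comp (continuous_const.mul continuous_id)
    exact (this.tendsto' 0 _ (by simp)).mono_left nhdsWithin_le_nhds
  have l1 : Tendsto (fun u : ℝ => (2 * ⟪z (s+u) - z s, deriv (deriv z) (s+u)⟫ * Real.cos (π*u)
      - 2 * π * ⟪z (s+u) - z s, deriv z (s+u)⟫ * Real.sin (π*u)) / u^1)
      (nhdsWithin 0 {(0:ℝ)}ᶜ) (nhds 0) := by
    have h := (((lim_A hz ho (s := s)).mul hcos).const_mul 2).sub
      ((((lim_P hz (s := s)).mul hsin).const_mul (2*π)))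
    simp only [mul_zero, zero_mul, mul_one, sub_zero] at h
    have : (fun u : ℝ => 2 * ((⟪z (s+u) - z s, deriv (deriv z) (s+u)⟫ / u) * Real.cos (π*u))
        - 2 * π * ((⟪z (s+u) - z s, deriv z (s+u)⟫ / u) * Real.sin (π*u)))
        = fun u : ℝ => (2 * ⟪z (s+u) - z s, deriv (deriv z) (s+u)⟫ * Real.cos (π*u)
          - 2 * π * ⟪z (s+u) - z s, deriv z (s+u)⟫ * Real.sin (π*u)) / u^1 := by
      funext u
      ring
    rwa [this] at h
  refine key_squeeze (fun u => hasDerivAt_mf hz hsp u) ?_ ?_ l1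
  · simp
  · simp

lemma hasDerivAt_qf (hz : ContDiff ℝ 2 z) (hsp : ∀ u, ‖deriv z u‖ = L) (t : ℝ) :
    HasDerivAt (fun u => 2 * ‖z (s+u) - z s‖^2 * Real.cos (π*u)
        - 2 * (Real.sin (π*u)/π) * ⟪z (s+u) - z s, deriv z (s+u)⟫)
      ((2 * ⟪z (s+t) - z s, deriv z (s+t)⟫ * Real.cos (π*t)
          - 2 * L^2 * (Real.sin (π*t)/π))
        - 2 * π * ‖z (s+t) - z s‖^2 * Real.sin (π*t)
        - 2 * (Real.sin (π*t)/π) * ⟪z (s+t) - z s, deriv (deriv z) (s+t)⟫) t := by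
  have h := (((hasDerivAt_hh (s := s) hz t).mul (hasDerivAt_cosπ t)).const_mul 2).sub
    (((hasDerivAt_S t).mul (hasDerivAt_P (s := s) hz t)).const_mul 2)
  convert (config := {postTransparency := .all}) h using 1
  · funext u; simp only [Pi.sub_apply, Pi.mul_apply]; ring
  · rw [hsp (s+t)]
    ring

lemma lim_q3 (hz : ContDiff ℝ 2 z) (hsp : ∀ u, ‖deriv z u‖ = L)
    (ho : ∀ u, ⟪deriv z u, deriv (deriv z) u⟫ = 0) :
    Tendsto (fun u : ℝ => (2 * ‖z (s+u) - z s‖^2 * Real.cos (π*u)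
        - 2 * (Real.sin (π*u)/π) * ⟪z (s+u) - z s, deriv z (s+u)⟫) / u^3)
      (nhdsWithin 0 {(0:ℝ)}ᶜ) (nhds 0) := by
  have hsin : Tendsto (fun u : ℝ => Real.sin (π*u)) (nhdsWithin 0 {(0:ℝ)}ᶜ) (nhds 0) := by
    have : Continuous fun u : ℝ => Real.sin (π*u) :=
      Real.continuous_sin.comp (continuous_const.mul continuous_id)
    exact (this.tendsto' 0 _ (by simp)).mono_left nhdsWithin_le_nhds
  have l2 : Tendsto (fun u : ℝ => ((2 * ⟪z (s+u) - z s, deriv z (s+u)⟫ * Real.cos (π*u)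
      - 2 * L^2 * (Real.sin (π*u)/π))
      - 2 * π * ‖z (s+u) - z s‖^2 * Real.sin (π*u)
      - 2 * (Real.sin (π*u)/π) * ⟪z (s+u) - z s, deriv (deriv z) (s+u)⟫) / u^2)
      (nhdsWithin 0 {(0:ℝ)}ᶜ) (nhds 0) := by
    have h := ((lim_m2 hz hsp ho (s := s)).sub
        (((lim_h hz (s := s)).mul hsin).const_mul (2*π))).sub
      ((lim_S.mul (lim_A hz ho (s := s))).const_mul 2)
    simp only [mul_zero, zero_mul, mul_one, sub_zero] at h
    have : (fun u : ℝ => (2 * ⟪z (s+u) - z s, deriv z (s+u)⟫ * Real.cos (π*u)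
          - 2 * L^2 * (Real.sin (π*u)/π)) / u^2
        - 2 * π * ((‖z (s+u) - z s‖^2 / u^2) * Real.sin (π*u))
        - 2 * (((Real.sin (π*u)/π) / u) * (⟪z (s+u) - z s, deriv (deriv z) (s+u)⟫ / u)))
        = fun u : ℝ => ((2 * ⟪z (s+u) - z s, deriv z (s+u)⟫ * Real.cos (π*u)
          - 2 * L^2 * (Real.sin (π*u)/π))
          - 2 * π * ‖z (s+u) - z s‖^2 * Real.sin (π*u)
          - 2 * (Real.sin (π*u)/π) * ⟪z (s+u) - z s, deriv (deriv z) (s+u)⟫) / u^2 := by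
      funext u
      ring
    rwa [this] at h
  refine key_squeeze (fun u => hasDerivAt_qf hz hsp u) ?_ ?_ l2
  · simp
  · simp

lemma sin_ne_of_small {u : ℝ} (hu : u ≠ 0) (h1 : |u| < 1) : Real.sin (π*u) ≠ 0 := by
  rcases hu.lt_or_gt with hneg | hpos
  · have h2 : 0 < -u := by linarith
    have h3 : -u < 1 := by rw [abs_of_neg hneg] at h1; linarith
    have : 0 < Real.sin (π * (-u)) := by
      apply Real.sin_pos_of_pos_of_lt_pi
      · positivity
      · have := Real.pi_pos; nlinarith
    rw [mul_neg, Real.sin_neg] at this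
    intro h; rw [h] at this; simp at this
  · have h3 : u < 1 := by rw [abs_of_pos hpos] at h1; linarith
    have : 0 < Real.sin (π * u) := by
      apply Real.sin_pos_of_pos_of_lt_pi
      · positivity
      · have := Real.pi_pos; nlinarith
    exact ne_of_gt this

lemma abs_dArcChord {u : ℝ} (hsin : Real.sin (π*u) ≠ 0) (hN : 0 < ‖z (s+u) - z s‖) :
    |dArcChord z s u| = |2 * ‖z (s+u) - z s‖^2 * Real.cos (π*u)
        - 2 * (Real.sin (π*u)/π) * ⟪z (s+u) - z s, deriv z (s+u)⟫|
      / (2 * ‖z (s+u) - z s‖^3) := by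
  rw [dArcChord, if_neg (not_int_of_sin_ne hsin), arcChord, if_neg (not_int_of_sin_ne hsin),
    inner_simp, real_inner_self_eq_norm_sq]
  set a := Real.sin (π*u) with ha
  set N := ‖z (s+u) - z s‖ with hNdef
  set c := Real.cos (π*u) with hc
  set P : ℝ := ⟪z (s+u) - z s, deriv z (s+u)⟫ with hP
  have hπ : (π:ℝ) ≠ 0 := Real.pi_ne_zero
  have hNne : N ≠ 0 := ne_of_gt hN
  have hden : (0:ℝ) < 2 * N^3 := by positivity
  rcases hsin.lt_or_gt with hneg | hpos
  · rw [abs_of_neg hneg]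
    have e : -(-a / (π * N)) ^ 3 * ((a/π)⁻¹ * (((a/π)^2)⁻¹ * (a/π * P - c * N^2)))
        = -((2 * N^2 * c - 2 * (a/π) * P) / (2 * N^3)) := by
      field_simp
      ring
    rw [e, abs_neg, abs_div, abs_of_pos hden]
  · rw [abs_of_pos hpos]
    have e : -(a / (π * N)) ^ 3 * ((a/π)⁻¹ * (((a/π)^2)⁻¹ * (a/π * P - c * N^2)))
        = (2 * N^2 * c - 2 * (a/π) * P) / (2 * N^3) := by
      field_simp
      ring
    rw [e, abs_div, abs_of_pos hden]

lemma lim_dArcChord {M : ℝ} (hz : ContDiff ℝ 2 z) (hsp : ∀ u, ‖deriv z u‖ = L)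
    (ho : ∀ u, ⟪deriv z u, deriv (deriv z) u⟫ = 0) (hL : 0 < L)
    (hM : ∀ s t : ℝ, |Real.sin (π * t)| / π ≤ M * ‖z (s + t) - z s‖) :
    Tendsto (fun u => dArcChord z s u) (nhdsWithin 0 {(0:ℝ)}ᶜ) (nhds 0) := by
  have hLne : ‖deriv z s‖ ≠ 0 := by rw [hsp s]; exact ne_of_gt hL
  have hinv : Tendsto (fun u : ℝ => |u| / ‖z (s+u) - z s‖) (nhdsWithin 0 {(0:ℝ)}ᶜ)
      (nhds (‖deriv z s‖⁻¹)) := by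
    have h := (lim_N (s := s) hz).inv₀ hLne
    have : (fun u : ℝ => (‖z (s+u) - z s‖ / |u|)⁻¹) = fun u : ℝ => |u| / ‖z (s+u) - z s‖ := by
      funext u; rw [inv_div]
    rwa [this] at h
  have hb : Tendsto (fun u : ℝ => |(2 * ‖z (s+u) - z s‖^2 * Real.cos (π*u)
      - 2 * (Real.sin (π*u)/π) * ⟪z (s+u) - z s, deriv z (s+u)⟫) / u^3|
      * (|u| / ‖z (s+u) - z s‖)^3 / 2) (nhdsWithin 0 {(0:ℝ)}ᶜ) (nhds 0) := by
    have := ((lim_q3 hz hsp ho (s := s)).abs.mul (hinv.pow 3)).div_const 2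
    simpa using this
  apply squeeze_zero_norm' _ hb
  filter_upwards [self_mem_nhdsWithin,
    mem_nhdsWithin_of_mem_nhds (Metric.ball_mem_nhds (0:ℝ) one_pos)] with u hu hball
  have hu0 : u ≠ 0 := hu
  have h1 : |u| < 1 := by simpa [Real.dist_eq] using hball
  have hsin := sin_ne_of_small hu0 h1
  have hN := Npos hM hsin (s := s)
  rw [Real.norm_eq_abs, abs_dArcChord hsin hN]
  have hup : (0:ℝ) < |u| := abs_pos.mpr hu0
  have hNne : ‖z (s+u) - z s‖ ≠ 0 := ne_of_gt hN
  apply le_of_eq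
  rw [abs_div, abs_pow, div_pow]
  have h3 : |u|^3 ≠ 0 := by positivity
  rw [div_mul_div_comm, mul_comm (|u|^3) (‖z (s+u) - z s‖^3),
    mul_div_mul_right _ _ h3, div_div, mul_comm (‖z (s+u) - z s‖^3) 2]

lemma hasDerivAt_arcChord_zero {M : ℝ} (hz : ContDiff ℝ 2 z) (hsp : ∀ u, ‖deriv z u‖ = L)
    (ho : ∀ u, ⟪deriv z u, deriv (deriv z) u⟫ = 0) (hL : 0 < L)
    (hM : ∀ s t : ℝ, |Real.sin (π * t)| / π ≤ M * ‖z (s + t) - z s‖) :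
    HasDerivAt (fun u => arcChord z s u) 0 0 := by
  rw [hasDerivAt_iff_tendsto_slope]
  have harc0 : arcChord z s 0 = L⁻¹ := by
    rw [arcChord, if_pos ⟨0, by simp⟩, hsp s]
  have hLne : ‖deriv z s‖ ≠ 0 := by rw [hsp s]; exact ne_of_gt hL
  have hinv : Tendsto (fun u : ℝ => |u| / ‖z (s+u) - z s‖) (nhdsWithin 0 {(0:ℝ)}ᶜ)
      (nhds (‖deriv z s‖⁻¹)) := by
    have h := (lim_N (s := s) hz).inv₀ hLne
    have : (fun u : ℝ => (‖z (s+u) - z s‖ / |u|)⁻¹) = fun u : ℝ => |u| / ‖z (s+u) - z s‖ := by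
      funext u; rw [inv_div]
    rwa [this] at h
  have hinv2 : Tendsto (fun u : ℝ => |u| / (L * (|Real.sin (π*u)|/π) + ‖z (s+u) - z s‖))
      (nhdsWithin 0 {(0:ℝ)}ᶜ) (nhds ((2*L)⁻¹)) := by
    have hsum : Tendsto (fun u : ℝ => (L * (|Real.sin (π*u)|/π) + ‖z (s+u) - z s‖) / |u|)
        (nhdsWithin 0 {(0:ℝ)}ᶜ) (nhds (2*L)) := by
      have h1 : Tendsto (fun u : ℝ => L * (|Real.sin (π*u)|/π) / |u|)
          (nhdsWithin 0 {(0:ℝ)}ᶜ) (nhds L) := by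
        have h2 := (lim_S.abs).const_mul L
        have : (fun u : ℝ => L * |(Real.sin (π*u)/π) / u|)
            = fun u : ℝ => L * (|Real.sin (π*u)|/π) / |u| := by
          funext u
          rw [abs_div, abs_div, abs_of_pos Real.pi_pos, mul_div_assoc]
        rw [this] at h2
        simpa using h2
      have h3 := h1.add (lim_N (s := s) hz)
      rw [hsp s] at h3
      have : (fun u : ℝ => L * (|Real.sin (π*u)|/π) / |u| + ‖z (s+u) - z s‖ / |u|)
          = fun u : ℝ => (L * (|Real.sin (π*u)|/π) + ‖z (s+u) - z s‖) / |u| := by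
        funext u; rw [← add_div]
      rw [this] at h3
      convert h3 using 2
      ring
    have h := hsum.inv₀ (by positivity)
    have : (fun u : ℝ => ((L * (|Real.sin (π*u)|/π) + ‖z (s+u) - z s‖) / |u|)⁻¹)
        = fun u : ℝ => |u| / (L * (|Real.sin (π*u)|/π) + ‖z (s+u) - z s‖) := by
      funext u; rw [inv_div]
    rwa [this] at h
  have hb : Tendsto (fun u : ℝ =>
      |(‖z (s+u) - z s‖^2 - L^2 * (Real.sin (π*u)/π)^2) / u^3|
      * (|u| / ‖z (s+u) - z s‖)
      * (|u| / (L * (|Real.sin (π*u)|/π) + ‖z (s+u) - z s‖)) / L)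
      (nhdsWithin 0 {(0:ℝ)}ᶜ) (nhds 0) := by
    have := (((lim_w3 hz hsp ho (s := s)).abs.mul hinv).mul hinv2).div_const L
    simpa using this
  apply squeeze_zero_norm' _ hb
  filter_upwards [self_mem_nhdsWithin,
    mem_nhdsWithin_of_mem_nhds (Metric.ball_mem_nhds (0:ℝ) one_pos)] with u hu hball
  have hu0 : u ≠ 0 := hu
  have h1 : |u| < 1 := by simpa [Real.dist_eq] using hball
  have hsin := sin_ne_of_small hu0 h1
  have hN := Npos hM hsin (s := s)
  have hNne : ‖z (s+u) - z s‖ ≠ 0 := ne_of_gt hN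
  have hup : (0:ℝ) < |u| := abs_pos.mpr hu0
  have hπ := Real.pi_pos
  set N := ‖z (s+u) - z s‖ with hNdef
  set B := |Real.sin (π*u)|/π with hB
  have hBpos : 0 < B := by
    rw [hB]; exact div_pos (abs_pos.mpr hsin) hπ
  have hden : 0 < L * B + N := by positivity
  have harcu : arcChord z s u = B / N := by
    rw [arcChord, if_neg (not_int_of_sin_ne hsin), hB, div_div]
  have hslope : slope (fun u => arcChord z s u) 0 u = (B/N - L⁻¹) / u := by
    rw [slope_def_field, harcu, harc0]
    rw [div_eq_inv_mul]
    simp [div_eq_inv_mul]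
  rw [hslope]
  have hkey : B/N - L⁻¹ = -((N^2 - L^2 * (Real.sin (π*u)/π)^2) / (L * N * (L*B + N))) := by
    have hB2 : B^2 = (Real.sin (π*u)/π)^2 := by
      rw [hB, ← sq_abs (Real.sin (π*u)/π), abs_div, abs_of_pos hπ]
    have hLne' : L ≠ 0 := ne_of_gt hL
    have hB2' : B^2 * π^2 = Real.sin (π*u)^2 := by
      rw [hB2]; field_simp
    field_simp
    linear_combination L^2 * hB2'
  rw [Real.norm_eq_abs, abs_div, hkey, abs_neg, abs_div]
  have : |L * N * (L*B + N)| = L * N * (L*B + N) := abs_of_pos (by positivity)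
  rw [this]
  apply le_of_eq
  rw [abs_div, abs_pow]
  field_simp

lemma int_shift_iff (t : ℝ) : (∃ n : ℤ, t + 1 = (n:ℝ)) ↔ (∃ n : ℤ, t = (n:ℝ)) := by
  constructor
  · rintro ⟨n, hn⟩
    exact ⟨n - 1, by push_cast; linarith⟩
  · rintro ⟨n, rfl⟩
    exact ⟨n + 1, by push_cast; ring⟩

lemma arcChord_periodic (hper : ∀ u, z (u+1) = z u) (t : ℝ) :
    arcChord z s (t+1) = arcChord z s t := by
  rcases Classical.em (∃ n : ℤ, t = (n:ℝ)) with hint | hint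
  · rw [arcChord, if_pos ((int_shift_iff t).mpr hint), arcChord, if_pos hint]
  · rw [arcChord, if_neg (fun h => hint ((int_shift_iff t).mp h)), arcChord, if_neg hint]
    have e1 : s + (t+1) = (s+t) + 1 := by ring
    have e2 : π*(t+1) = π*t + π := by ring
    rw [e1, hper (s+t), e2, Real.sin_add_pi, abs_neg]

lemma deriv_periodic (hz : ContDiff ℝ 2 z) (hper : ∀ u, z (u+1) = z u) (t : ℝ) :
    deriv z (t+1) = deriv z t := by
  have h1 : HasDerivAt (fun u : ℝ => u + 1) 1 t := by
    simpa using (hasDerivAt_id t).add_const 1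
  have h2 : HasDerivAt z (deriv z (t+1)) (t+1) := ((zdiff hz) (t+1)).hasDerivAt
  have h3 := h2.scomp t h1
  have h4 : (z ∘ fun u : ℝ => u + 1) = z := by funext u; exact hper u
  rw [h4] at h3
  have := h3.deriv
  simpa using this.symm

lemma dArcChord_periodic (hz : ContDiff ℝ 2 z) (hper : ∀ u, z (u+1) = z u) (t : ℝ) :
    dArcChord z s (t+1) = dArcChord z s t := by
  rcases Classical.em (∃ n : ℤ, t = (n:ℝ)) with hint | hint
  · rw [dArcChord, if_pos ((int_shift_iff t).mpr hint), dArcChord, if_pos hint]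
  · rw [dArcChord, if_neg (fun h => hint ((int_shift_iff t).mp h)), dArcChord, if_neg hint,
      arcChord_periodic hper]
    have e1 : s + (t+1) = (s+t) + 1 := by ring
    have e2 : π*(t+1) = π*t + π := by ring
    rw [e1, hper (s+t), deriv_periodic hz hper (s+t), e2, Real.sin_add_pi, Real.cos_add_pi]
    rw [inner_simp, inner_simp]
    ring

lemma arcChord_sub_int (hper : ∀ u, z (u+1) = z u) (t : ℝ) (n : ℤ) :
    arcChord z s (t - n) = arcChord z s t := by
  have p : Function.Periodic (arcChord z s) 1 := fun x => arcChord_periodic hper x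
  have := p.sub_int_mul_eq (x := t) n
  simpa using this

lemma dArcChord_sub_int (hz : ContDiff ℝ 2 z) (hper : ∀ u, z (u+1) = z u) (t : ℝ) (n : ℤ) :
    dArcChord z s (t - n) = dArcChord z s t := by
  have p : Function.Periodic (dArcChord z s) 1 := fun x => dArcChord_periodic hz hper x
  have := p.sub_int_mul_eq (x := t) n
  simpa using this

lemma hasDerivAt_arcChord_all (hz : ContDiff ℝ 2 z) (hsp : ∀ u, ‖deriv z u‖ = L)
    (ho : ∀ u, ⟪deriv z u, deriv (deriv z) u⟫ = 0) (hL : 0 < L)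
    (hM : ∀ s t : ℝ, |Real.sin (π * t)| / π ≤ M * ‖z (s + t) - z s‖)
    (hper : ∀ u, z (u+1) = z u) (t : ℝ) :
    HasDerivAt (fun u => arcChord z s u) (dArcChord z s t) t := by
  rcases Classical.em (∃ n : ℤ, t = (n:ℝ)) with ⟨n, rfl⟩ | hint
  · rw [dArcChord, if_pos ⟨n, rfl⟩]
    have h0 := hasDerivAt_arcChord_zero hz hsp ho hL hM (s := s)
    have hsub : HasDerivAt (fun u : ℝ => u - (n:ℝ)) 1 (n:ℝ) := (hasDerivAt_id _).sub_const _
    have h0' : HasDerivAt (fun u => arcChord z s u) 0 ((fun u : ℝ => u - (n:ℝ)) (n:ℝ)) := by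
      simpa using h0
    have hcomp : HasDerivAt (fun u : ℝ => arcChord z s (u - (n:ℝ))) (0 * 1) (n:ℝ) :=
      HasDerivAt.comp (h := fun u : ℝ => u - (n:ℝ)) (h₂ := fun u => arcChord z s u)
        (n:ℝ) h0' hsub
    have heq : (fun u : ℝ => arcChord z s (u - (n:ℝ))) = fun u => arcChord z s u := by
      funext u
      exact arcChord_sub_int hper u n
    rw [heq] at hcomp
    simpa using hcomp
  · exact hasDerivAt_arcChord_off hz hM hint

lemma continuousAt_dArcChord_zero (hz : ContDiff ℝ 2 z) (hsp : ∀ u, ‖deriv z u‖ = L)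
    (ho : ∀ u, ⟪deriv z u, deriv (deriv z) u⟫ = 0) (hL : 0 < L)
    (hM : ∀ s t : ℝ, |Real.sin (π * t)| / π ≤ M * ‖z (s + t) - z s‖) :
    ContinuousAt (fun u => dArcChord z s u) 0 := by
  have h0 : dArcChord z s 0 = 0 := by
    rw [dArcChord, if_pos ⟨0, by simp⟩]
  have key : Tendsto (fun u => dArcChord z s u) (nhds 0) (nhds 0) := by
    have h2 : Tendsto (fun u => dArcChord z s u) (pure 0) (nhds 0) := by
      have := tendsto_pure_nhds (fun u => dArcChord z s u) 0
      rwa [show dArcChord z s 0 = 0 from h0] at this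
    have hmap : Filter.map (fun u => dArcChord z s u)
        (nhdsWithin 0 {(0:ℝ)}ᶜ ⊔ pure 0) ≤ nhds 0 := by
      rw [Filter.map_sup]
      exact sup_le (lim_dArcChord hz hsp ho hL hM) h2
    have h3 : Tendsto (fun u => dArcChord z s u)
        (nhdsWithin 0 {(0:ℝ)}ᶜ ⊔ pure 0) (nhds 0) := hmap
    rwa [nhdsNE_sup_pure] at h3
  unfold ContinuousAt
  simpa [h0] using key

lemma continuous_dArcChord (hz : ContDiff ℝ 2 z) (hsp : ∀ u, ‖deriv z u‖ = L)
    (ho : ∀ u, ⟪deriv z u, deriv (deriv z) u⟫ = 0) (hL : 0 < L)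
    (hM : ∀ s t : ℝ, |Real.sin (π * t)| / π ≤ M * ‖z (s + t) - z s‖)
    (hper : ∀ u, z (u+1) = z u) :
    Continuous (fun u => dArcChord z s u) := by
  rw [continuous_iff_continuousAt]
  intro t
  rcases Classical.em (∃ n : ℤ, t = (n:ℝ)) with ⟨n, rfl⟩ | hint
  · have h0 := continuousAt_dArcChord_zero hz hsp ho hL hM (s := s)
    have hsub : ContinuousAt (fun u : ℝ => u - (n:ℝ)) (n:ℝ) :=
      (continuous_id.sub continuous_const).continuousAt
    have h0' : ContinuousAt (fun u => dArcChord z s u) ((fun u : ℝ => u - (n:ℝ)) (n:ℝ)) := by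
      simpa using h0
    have hcomp : ContinuousAt (fun u : ℝ => dArcChord z s (u - (n:ℝ))) (n:ℝ) :=
      ContinuousAt.comp (f := fun u : ℝ => u - (n:ℝ)) (g := fun u => dArcChord z s u)
        h0' hsub
    have heq : (fun u : ℝ => dArcChord z s (u - (n:ℝ))) = fun u => dArcChord z s u := by
      funext u
      exact dArcChord_sub_int hz hper u n
    rwa [heq] at hcomp
  · -- off ℤ
    have hsin : Real.sin (π*t) ≠ 0 := sin_ne_of_not_int hint
    have hscont : Continuous (fun u : ℝ => Real.sin (π*u)) :=
      Real.continuous_sin.comp (continuous_const.mul continuous_id)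
    have ev1 : ∀ᶠ u in nhds t, Real.sin (π*u) ≠ 0 :=
      hscont.continuousAt.eventually_ne hsin
    have hSne : Real.sin (π*t)/π ≠ 0 := div_ne_zero hsin Real.pi_ne_zero
    have c1 : ContinuousAt (fun u : ℝ => Real.sin (π*u)/π) t :=
      (hscont.div_const π).continuousAt
    have ccos : ContinuousAt (fun u : ℝ => Real.cos (π*u)) t :=
      (Real.continuous_cos.comp (continuous_const.mul continuous_id)).continuousAt
    have cz : ContinuousAt (fun u : ℝ => z (s+u) - z s) t :=
      (((zdiff hz).continuous.comp (continuous_const.add continuous_id)).sub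
        continuous_const).continuousAt
    have cz' : ContinuousAt (fun u : ℝ => deriv z (s+u)) t :=
      ((deriv_contDiff hz).continuous.comp (continuous_const.add continuous_id)).continuousAt
    have harc : ContinuousAt (fun u => arcChord z s u) t :=
      (hasDerivAt_arcChord_off hz hM hint).continuousAt
    have cF : ContinuousAt (fun u => -(arcChord z s u) ^ 3 *
        ⟪(Real.sin (π * u) / π)⁻¹ • (z (s + u) - z s),
          ((Real.sin (π * u) / π) ^ 2)⁻¹ •
            ((Real.sin (π * u) / π) • deriv z (s + u)
              - Real.cos (π * u) • (z (s + u) - z s))⟫) t := by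
      refine ContinuousAt.mul ((harc.pow 3).neg) ?_
      refine ContinuousAt.inner (𝕜 := ℝ) ((c1.inv₀ hSne).smul cz) ?_
      refine ContinuousAt.smul ((c1.pow 2).inv₀ (pow_ne_zero 2 hSne)) ?_
      exact (c1.smul cz').sub (ccos.smul cz)
    refine cF.congr ?_
    filter_upwards [ev1] with u hu
    have : ¬ ∃ n : ℤ, u = (n:ℝ) := by
      rintro ⟨m, rfl⟩
      exact hu (by simpa [mul_comm] using Real.sin_int_mul_pi m)
    rw [dArcChord, if_neg this]

end AC
end


theorem expansion_of_arc_chord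
    (z : ℝ → E2) (L : ℝ) (hL : 0 < L)
    (hz : ContDiff ℝ 2 z)
    (hper : ∀ s, z (s + 1) = z s)
    (hsimple : Set.InjOn z (Set.Ico (0 : ℝ) 1))
    (hspeed : ∀ s, ‖deriv z s‖ = L)
    (horth : ∀ s, ⟪deriv z s, deriv (deriv z) s⟫ = 0)
    (harcchord : ∃ M : ℝ, (∀ s t : ℝ, |Real.sin (π * t)| / π ≤ M * ‖z (s + t) - z s‖) ∧
      (∀ s : ℝ, 1 ≤ M * ‖deriv z s‖)) :
    (∀ s t : ℝ, (¬ ∃ n : ℤ, t = (n : ℝ)) →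
      HasDerivAt (fun t' => arcChord z s t') (dArcChord z s t) t) ∧
    (∀ s : ℝ, Filter.Tendsto (fun t => dArcChord z s t)
      (nhdsWithin 0 {(0 : ℝ)}ᶜ) (nhds 0)) ∧
    (∀ s : ℝ, Continuous fun t => dArcChord z s t) ∧
    (∀ s t : ℝ, arcChord z s t =
      L⁻¹ + t * ∫ τ in (0:ℝ)..1, dArcChord z s ((1 - τ) * t)) := by
  obtain ⟨M, hM, hM2⟩ := harcchord
  refine ⟨fun s t ht => AC.hasDerivAt_arcChord_off hz hM ht,
    fun s => AC.lim_dArcChord hz hspeed horth hL hM,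
    fun s => AC.continuous_dArcChord hz hspeed horth hL hM hper,
    fun s t => ?_⟩
  have harc0 : arcChord z s 0 = L⁻¹ := by
    rw [arcChord, if_pos ⟨0, by simp⟩, hspeed s]
  have key : ∫ u in (0:ℝ)..t, dArcChord z s u = arcChord z s t - L⁻¹ := by
    have h := intervalIntegral.integral_eq_sub_of_hasDerivAt
      (f := fun u => arcChord z s u) (f' := fun u => dArcChord z s u)
      (fun x _ => AC.hasDerivAt_arcChord_all hz hspeed horth hL hM hper x)
      ((AC.continuous_dArcChord hz hspeed horth hL hM hper).intervalIntegrable 0 t)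
    rw [h, harc0]
  rcases eq_or_ne t 0 with rfl | ht
  · simp [harc0]
  · have sub1 : ∫ τ in (0:ℝ)..1, dArcChord z s ((1-τ)*t)
        = ∫ τ in (0:ℝ)..1, dArcChord z s (τ*t) := by
      have h := intervalIntegral.integral_comp_sub_left
        (a := (0:ℝ)) (b := (1:ℝ)) (fun τ => dArcChord z s (τ*t)) 1
      simpa using h
    have sub2 : ∫ τ in (0:ℝ)..1, dArcChord z s (τ*t)
        = t⁻¹ • ∫ u in (0:ℝ)..t, dArcChord z s u := by
      have h := intervalIntegral.integral_comp_mul_right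
        (a := (0:ℝ)) (b := (1:ℝ)) (fun u => dArcChord z s u) ht
      simpa using h
    rw [sub1, sub2, key, smul_eq_mul]
    field_simp
    ring

end
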